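/- Let A = h(φ) a + k(φ) l where l, a are constant vectors in ℝ⁴ (viewed as constant vector fields on Minkowski-like coordinates with l = (1,0,0,0), a = (0,1,−i,0), φ(x)=x³), and h,k : ℝ → ℂ are differentiable. Then the torsion T := ½ Re(A ⊗ dA), with (dA)_{μν} = ∂_μ A_ν − ∂_ν A_μ (A_ν lowered with the pp-metric g for f ≡ 0), has the form T = Σ_{j,k=1}^2 t_{jk} a_j ⊗ (l∧a_k) + Σ_j t_j l ⊗ (l∧a_j) with t_{jk} symmetric and t₁₁+t₂₂=0, where a₁ = Re a, a₂ = Im a. -/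

import Mathlib

lemma key12 (h k : ℝ → ℂ) (hh : Differentiable ℝ h) (hk : Differentiable ℝ k) (c d : ℂ)
    (x v : Fin 4 → ℝ) :
    fderiv ℝ (fun y : Fin 4 → ℝ => h (y 3) * c + k (y 3) * d) x v =
      (v 3 : ℝ) • (deriv h (x 3) * c + deriv k (x 3) * d) := by
  have h1 : HasFDerivAt (fun y : Fin 4 → ℝ => y 3)
      (ContinuousLinearMap.proj 3 : (Fin 4 → ℝ) →L[ℝ] ℝ) x :=
    (ContinuousLinearMap.proj (R := ℝ) (φ := fun _ : Fin 4 => ℝ) 3).hasFDerivAt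
  have hdh : HasFDerivAt h (ContinuousLinearMap.smulRight (1 : ℝ →L[ℝ] ℝ) (deriv h (x 3))) (x 3) :=
    (hh (x 3)).hasDerivAt.hasFDerivAt
  have hdk : HasFDerivAt k (ContinuousLinearMap.smulRight (1 : ℝ →L[ℝ] ℝ) (deriv k (x 3))) (x 3) :=
    (hk (x 3)).hasDerivAt.hasFDerivAt
  have h2 := ((hdh.comp x h1).mul_const c).add ((hdk.comp x h1).mul_const d)
  simp only [Function.comp_def] at h2
  rw [show (fun y : Fin 4 → ℝ => h (y 3) * c + k (y 3) * d) = ((fun y => h (y 3) * c) + fun y => k (y 3) * d) from rfl, h2.fderiv]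
  simp [Complex.real_smul]
  ring


/-- For A = h(φ)a + k(φ)l with l = (1,0,0,0), a = (0,1,-i,0), φ(x) = x³ (lowered
components l_μ = (0,0,0,1), a_μ = (0,-1,i,0) in the pp-metric with f ≡ 0), the torsion
T := ½ Re(A ⊗ dA) has the form Σ t_{jk} a_j ⊗ (l∧a_k) + Σ t_j l ⊗ (l∧a_j) with t_{jk}
symmetric and trace-free, where a₁ = Re a, a₂ = Im a. -/
theorem stmt12 (h k : ℝ → ℂ) (hh : Differentiable ℝ h) (hk : Differentiable ℝ k) :
    let lc : Fin 4 → ℂ := ![0, 0, 0, 1]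
    let ac : Fin 4 → ℂ := ![0, -1, Complex.I, 0]
    let lr : Fin 4 → ℝ := ![0, 0, 0, 1]
    let ar : Fin 2 → Fin 4 → ℝ := ![fun μ => (ac μ).re, fun μ => (ac μ).im]
    let A : (Fin 4 → ℝ) → Fin 4 → ℂ := fun x ν => h (x 3) * ac ν + k (x 3) * lc ν
    let dA : (Fin 4 → ℝ) → Fin 4 → Fin 4 → ℂ := fun x μ ν =>
      fderiv ℝ (fun y => A y ν) x (Pi.single μ 1) -
        fderiv ℝ (fun y => A y μ) x (Pi.single ν 1)
    let T : (Fin 4 → ℝ) → Fin 4 → Fin 4 → Fin 4 → ℝ := fun x α μ ν =>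
      (1 / 2) * (A x α * dA x μ ν).re
    ∃ t : Fin 2 → Fin 2 → ℝ → ℝ, ∃ s : Fin 2 → ℝ → ℝ,
      (∀ j k' u, t j k' u = t k' j u) ∧ (∀ u, t 0 0 u + t 1 1 u = 0) ∧
      ∀ x α μ ν, T x α μ ν =
        (∑ j, ∑ k', t j k' (x 3) * ar j α * (lr μ * ar k' ν - ar k' μ * lr ν)) +
          ∑ j, s j (x 3) * lr α * (lr μ * ar j ν - ar j μ * lr ν) := by
  intro lc ac lr ar A dA T
  have hs1 : ∀ m : Fin 4, (Pi.single m (1:ℝ) : Fin 4 → ℝ) 3 = lr m := by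
    intro m; fin_cases m <;> simp [lr, Pi.single_apply]
  have hlc : ∀ m : Fin 4, lc m = (lr m : ℂ) := by
    intro m; fin_cases m <;> simp [lc, lr]
  have hac : ∀ m : Fin 4, ac m = (ar 0 m : ℂ) + (ar 1 m : ℂ) * Complex.I := by
    intro m
    simp only [ar, Matrix.cons_val_zero, Matrix.cons_val_one, Matrix.head_cons]
    exact (Complex.re_add_im _).symm
  refine ⟨![![fun u => (h u * deriv h u).re / 2, fun u => -(h u * deriv h u).im / 2],
            ![fun u => -(h u * deriv h u).im / 2, fun u => -(h u * deriv h u).re / 2]],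
          ![fun u => (k u * deriv h u).re / 2, fun u => -(k u * deriv h u).im / 2],
          ?_, ?_, ?_⟩
  · intro j k' u; fin_cases j <;> fin_cases k' <;> simp
  · intro u; simp; ring
  · intro x α μ ν
    have hdA : ∀ μ' ν' : Fin 4, dA x μ' ν' =
        (lr μ' : ℝ) • (deriv h (x 3) * ac ν' + deriv k (x 3) * lc ν') -
        (lr ν' : ℝ) • (deriv h (x 3) * ac μ' + deriv k (x 3) * lc μ') := by
      intro μ' ν'
      simp only [dA, A]
      rw [key12 h k hh hk (ac ν') (lc ν'), key12 h k hh hk (ac μ') (lc μ'), hs1, hs1]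
    simp only [T, hdA, A, Fin.sum_univ_two, hac, hlc]
    simp only [Matrix.cons_val_zero, Matrix.cons_val_one, Matrix.head_cons, Matrix.cons_val',
      Matrix.empty_val', Matrix.cons_val_fin_one, Matrix.vecHead, Matrix.vecTail, Complex.real_smul,
      Complex.add_re, Complex.sub_re, Complex.mul_re, Complex.mul_im, Complex.add_im,
      Complex.sub_im, Complex.I_re, Complex.I_im, Complex.ofReal_re, Complex.ofReal_im]
    ring
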